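/- (L+(CS))-grammars recognize all permutations of regular languages: for every regular language R over a finite alphabet Σ with ε ∉ R, there exists an (L+(CS))-grammar G such that L(G) = perm(R). -/
import Mathlib


/-- Types of the Lambek calculus `L` (and of `L+(CS)`), built from primitive
types `P` by `\` (`ldiv A B = A \ B`), `/` (`rdiv B A = B / A`) and `·`. -/
inductive Fm0 (P : Type) : Type
  | prim : P → Fm0 P
  | ldiv : Fm0 P → Fm0 P → Fm0 P
  | rdiv : Fm0 P → Fm0 P → Fm0 P
  | mul  : Fm0 P → Fm0 P → Fm0 P
deriving DecidableEq

/-- Derivability of sequents in the calculus `L+(CS)`: the Lambek calculus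
(with cut) extended with the structural rule (CS): from `Pi,Psi → A` infer
`Psi,Pi → A`. -/
inductive Dcs (P : Type) : List (Fm0 P) → Fm0 P → Prop
  | ax (A : Fm0 P) :
      Dcs P [A] A
  | ldivL (Γ Δ Pi : List (Fm0 P)) (A B C : Fm0 P) :
      Dcs P (Γ ++ B :: Δ) C → Dcs P Pi A → Pi ≠ [] →
      Dcs P (Γ ++ Pi ++ Fm0.ldiv A B :: Δ) C
  | ldivR (Pi : List (Fm0 P)) (A B : Fm0 P) :
      Dcs P (A :: Pi) B → Pi ≠ [] →
      Dcs P Pi (Fm0.ldiv A B)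
  | rdivL (Γ Δ Pi : List (Fm0 P)) (A B C : Fm0 P) :
      Dcs P (Γ ++ B :: Δ) C → Dcs P Pi A → Pi ≠ [] →
      Dcs P (Γ ++ Fm0.rdiv B A :: (Pi ++ Δ)) C
  | rdivR (Pi : List (Fm0 P)) (A B : Fm0 P) :
      Dcs P (Pi ++ [A]) B → Pi ≠ [] →
      Dcs P Pi (Fm0.rdiv B A)
  | mulL (Γ Δ : List (Fm0 P)) (A B C : Fm0 P) :
      Dcs P (Γ ++ A :: B :: Δ) C →
      Dcs P (Γ ++ Fm0.mul A B :: Δ) C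
  | mulR (Pi Psi : List (Fm0 P)) (A B : Fm0 P) :
      Dcs P Pi A → Dcs P Psi B → Pi ≠ [] → Psi ≠ [] →
      Dcs P (Pi ++ Psi) (Fm0.mul A B)
  | cs (Pi Psi : List (Fm0 P)) (A : Fm0 P) :
      Dcs P (Pi ++ Psi) A → Pi ≠ [] → Psi ≠ [] →
      Dcs P (Psi ++ Pi) A
  | cut (Γ Δ Pi : List (Fm0 P)) (A B : Fm0 P) :
      Dcs P Pi A → Dcs P (Γ ++ A :: Δ) B → Pi ≠ [] →
      Dcs P (Γ ++ Pi ++ Δ) B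

/-- The language recognized by a categorial grammar based on a calculus with
derivability relation `K`: the grammar has distinguished type `S` and finite
dictionary `R` (a list of pairs `(a, T)` meaning `a ▷ T`); a nonempty word
`a1…an` is recognized iff there are types `T1,…,Tn` with `ai ▷ Ti` and
`K ⊢ T1,…,Tn → S`. -/
def GLang {α Ty : Type} (K : List Ty → Ty → Prop) (S : Ty) (R : List (α × Ty)) :
    Set (List α) :=
  { w | w ≠ [] ∧ ∃ Ts : List Ty, List.Forall₂ (fun a T => (a, T) ∈ R) w Ts ∧ K Ts S }

/-- The permutation closure `perm(L)` of a language `L`: all words obtained by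
permuting the letters of a word of `L`. -/
def permClosure {α : Type} (L : Set (List α)) : Set (List α) :=
  { w | ∃ v ∈ L, w.Perm v }

namespace LCSaux

/-! ### Permutation closure of Dcs -/

lemma dcs_swap {P : Type} (Γ Δ : List (Fm0 P)) (x y C : Fm0 P)
    (h : Dcs P (Γ ++ x :: y :: Δ) C) : Dcs P (Γ ++ y :: x :: Δ) C := by
  have h1 : Dcs P (Γ ++ Fm0.mul x y :: Δ) C := Dcs.mulL Γ Δ x y C h
  have h2 : Dcs P ([x] ++ [y]) (Fm0.mul x y) :=
    Dcs.mulR [x] [y] x y (Dcs.ax x) (Dcs.ax y) (by simp) (by simp)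
  have h3 : Dcs P ([y] ++ [x]) (Fm0.mul x y) := Dcs.cs [x] [y] _ h2 (by simp) (by simp)
  have h4 := Dcs.cut Γ Δ ([y] ++ [x]) (Fm0.mul x y) C h3 h1 (by simp)
  simpa using h4

lemma dcs_perm_aux {P : Type} {l l' : List (Fm0 P)} (h : l.Perm l') :
    ∀ Γ Δ C, Dcs P (Γ ++ l ++ Δ) C → Dcs P (Γ ++ l' ++ Δ) C := by
  induction h with
  | nil => intro Γ Δ C h; exact h
  | cons x _ ih =>
      intro Γ Δ C h
      have := ih (Γ ++ [x]) Δ C (by simpa [List.append_assoc] using h)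
      simpa [List.append_assoc] using this
  | swap x y l =>
      intro Γ Δ C h
      have := dcs_swap Γ (l ++ Δ) y x C (by simpa using h)
      simpa using this
  | trans _ _ ih₁ ih₂ => intro Γ Δ C h; exact ih₂ _ _ _ (ih₁ _ _ _ h)

lemma dcs_perm {P : Type} {l l' : List (Fm0 P)} {C : Fm0 P} (h : l.Perm l')
    (d : Dcs P l C) : Dcs P l' C := by
  have := dcs_perm_aux h [] [] C (by simpa using d)
  simpa using this

/-! ### Semantics in the free commutative monoid -/

def interp {α : Type} (v0 : ℕ → Set (Multiset α)) : Fm0 ℕ → Set (Multiset α)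
  | .prim p => v0 p
  | .ldiv A B => {m | ∀ x ∈ interp v0 A, x + m ∈ interp v0 B}
  | .rdiv B A => {m | ∀ x ∈ interp v0 A, x + m ∈ interp v0 B}
  | .mul A B => {m | ∃ x ∈ interp v0 A, ∃ y ∈ interp v0 B, m = x + y}

lemma forall2_append {α β : Type} {r : α → β → Prop} :
    ∀ {l₁ l₂ : List α} {u : List β}, List.Forall₂ r (l₁ ++ l₂) u →
      ∃ u₁ u₂, u = u₁ ++ u₂ ∧ List.Forall₂ r l₁ u₁ ∧ List.Forall₂ r l₂ u₂ := by
  intro l₁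
  induction l₁ with
  | nil => intro l₂ u h; exact ⟨[], u, rfl, List.Forall₂.nil, h⟩
  | cons a l₁ ih =>
      intro l₂ u h
      rcases List.forall₂_cons_left_iff.mp h with ⟨b, u', hb, hu', rfl⟩
      rcases ih hu' with ⟨u₁, u₂, rfl, h₁, h₂⟩
      exact ⟨b :: u₁, u₂, rfl, List.Forall₂.cons hb h₁, h₂⟩

lemma sound {α : Type} (v0 : ℕ → Set (Multiset α)) {Γ : List (Fm0 ℕ)} {C : Fm0 ℕ}
    (h : Dcs ℕ Γ C) :
    ∀ ms : List (Multiset α), List.Forall₂ (fun T m => m ∈ interp v0 T) Γ ms →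
      ms.sum ∈ interp v0 C := by
  induction h with
  | ax A =>
      intro ms hms
      rcases List.forall₂_cons_left_iff.mp hms with ⟨m, u, hm, hu, rfl⟩
      rw [List.forall₂_nil_left_iff] at hu
      subst hu; simpa using hm
  | ldivL Γ Δ Pi A B C hBC hPi hne ih₁ ih₂ =>
      intro ms hms
      obtain ⟨u₁, u₂, rfl, h₁, h₂⟩ := forall2_append hms
      obtain ⟨mg, mp, rfl, hg, hp⟩ := forall2_append h₁
      obtain ⟨m, md, hm, hd, rfl⟩ := List.forall₂_cons_left_iff.mp h₂
      have hA : mp.sum ∈ interp v0 A := ih₂ _ hp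
      have hB : mp.sum + m ∈ interp v0 B := hm _ hA
      have := ih₁ (mg ++ (mp.sum + m) :: md)
        (List.rel_append hg (List.Forall₂.cons hB hd))
      have hsum : ((mg ++ mp) ++ m :: md).sum = (mg ++ (mp.sum + m) :: md).sum := by
        simp [List.sum_append]; abel
      rw [hsum]; exact this
  | ldivR Pi A B hAB hne ih =>
      intro ms hms
      intro x hx
      have := ih (x :: ms) (List.Forall₂.cons hx hms)
      simpa using this
  | rdivL Γ Δ Pi A B C hBC hPi hne ih₁ ih₂ =>
      intro ms hms
      obtain ⟨mg, u₂, rfl, hg, h₂⟩ := forall2_append hms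
      obtain ⟨m, u₃, hm, h₃, rfl⟩ := List.forall₂_cons_left_iff.mp h₂
      obtain ⟨mp, md, rfl, hp, hd⟩ := forall2_append h₃
      have hA : mp.sum ∈ interp v0 A := ih₂ _ hp
      have hB : mp.sum + m ∈ interp v0 B := hm _ hA
      have := ih₁ (mg ++ (mp.sum + m) :: md)
        (List.rel_append hg (List.Forall₂.cons hB hd))
      have hsum : (mg ++ m :: (mp ++ md)).sum = (mg ++ (mp.sum + m) :: md).sum := by
        simp [List.sum_append]; abel
      rw [hsum]; exact this
  | rdivR Pi A B hAB hne ih =>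
      intro ms hms
      intro x hx
      have := ih (ms ++ [x])
        (List.rel_append hms (List.Forall₂.cons hx List.Forall₂.nil))
      have hsum : (ms ++ [x]).sum = x + ms.sum := by simp [List.sum_append]; abel
      rwa [hsum] at this
  | mulL Γ Δ A B C hABC ih =>
      intro ms hms
      obtain ⟨mg, u₂, rfl, hg, h₂⟩ := forall2_append hms
      obtain ⟨m, md, hm, hd, rfl⟩ := List.forall₂_cons_left_iff.mp h₂
      obtain ⟨x, hx, y, hy, rfl⟩ := hm
      have := ih (mg ++ x :: y :: md)
        (List.rel_append hg (List.Forall₂.cons hx (List.Forall₂.cons hy hd)))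
      have hsum : (mg ++ (x + y) :: md).sum = (mg ++ x :: y :: md).sum := by
        simp [List.sum_append]; abel
      rw [hsum]; exact this
  | mulR Pi Psi A B hA hB hne₁ hne₂ ih₁ ih₂ =>
      intro ms hms
      obtain ⟨mp, mq, rfl, hp, hq⟩ := forall2_append hms
      refine ⟨mp.sum, ih₁ _ hp, mq.sum, ih₂ _ hq, ?_⟩
      simp [List.sum_append]
  | cs Pi Psi A hA hne₁ hne₂ ih =>
      intro ms hms
      obtain ⟨mq, mp, rfl, hq, hp⟩ := forall2_append hms
      have := ih (mp ++ mq) (List.rel_append hp hq)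
      have hsum : (mq ++ mp).sum = (mp ++ mq).sum := by simp [List.sum_append]; abel
      rw [hsum]; exact this
  | cut Γ Δ Pi A B hPi hB hne ih₁ ih₂ =>
      intro ms hms
      obtain ⟨u₁, md, rfl, h₁, hd⟩ := forall2_append hms
      obtain ⟨mg, mp, rfl, hg, hp⟩ := forall2_append h₁
      have hA : mp.sum ∈ interp v0 A := ih₁ _ hp
      have := ih₂ (mg ++ mp.sum :: md)
        (List.rel_append hg (List.Forall₂.cons hA hd))
      have hsum : ((mg ++ mp) ++ md).sum = (mg ++ mp.sum :: md).sum := by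
        simp [List.sum_append]
      rw [hsum]; exact this

end LCSaux

namespace LCSaux

def S₀ : Fm0 ℕ := Fm0.prim 0

section Grammar

variable {α σ : Type} [Fintype α] [Fintype σ]

open Classical in
noncomputable def dict (M : DFA α σ) (enc : σ → ℕ) : List (α × Fm0 ℕ) :=
  let letters := (Finset.univ : Finset α).toList
  let states := (Finset.univ : Finset σ).toList
  (letters.filter (fun a => decide (M.step M.start a ∈ M.accept))).map (fun a => (a, S₀))
  ++ letters.map (fun a => (a, Fm0.prim (enc (M.step M.start a))))
  ++ letters.flatMap (fun a => states.map (fun q =>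
      (a, Fm0.ldiv (Fm0.prim (enc q)) (Fm0.prim (enc (M.step q a))))))
  ++ letters.flatMap (fun a => (states.filter (fun q => decide (M.step q a ∈ M.accept))).map
      (fun q => (a, Fm0.ldiv (Fm0.prim (enc q)) S₀)))

lemma mem_dict {M : DFA α σ} {enc : σ → ℕ} {a : α} {T : Fm0 ℕ} :
    (a, T) ∈ dict M enc ↔
      (M.step M.start a ∈ M.accept ∧ T = S₀)
      ∨ T = Fm0.prim (enc (M.step M.start a))
      ∨ (∃ q, T = Fm0.ldiv (Fm0.prim (enc q)) (Fm0.prim (enc (M.step q a))))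
      ∨ (∃ q, M.step q a ∈ M.accept ∧ T = Fm0.ldiv (Fm0.prim (enc q)) S₀) := by
  classical
  simp only [dict, List.mem_append, List.mem_map, List.mem_filter, List.mem_flatMap,
    Finset.mem_toList, Finset.mem_univ, true_and, Prod.mk.injEq, decide_eq_true_eq]
  aesop

def v0 (M : DFA α σ) (enc : σ → ℕ) : ℕ → Set (Multiset α) := fun n =>
  { m | ∃ u : List α, m = (↑u : Multiset α) ∧ u ≠ [] ∧
      ((n = 0 ∧ u ∈ M.accepts) ∨ ∃ q, n = enc q ∧ M.eval u = q) }

lemma dict_sound {M : DFA α σ} {enc : σ → ℕ} (hinj : Function.Injective enc)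
    (hpos : ∀ q, enc q ≠ 0) {a : α} {T : Fm0 ℕ} (h : (a, T) ∈ dict M enc) :
    ({a} : Multiset α) ∈ interp (v0 M enc) T := by
  have hsing : ({a} : Multiset α) = (↑[a] : Multiset α) := by simp
  rcases mem_dict.mp h with ⟨hacc, rfl⟩ | rfl | ⟨q, rfl⟩ | ⟨q, hacc, rfl⟩
  · -- T = S₀
    refine ⟨[a], hsing, by simp, Or.inl ⟨rfl, ?_⟩⟩
    rw [DFA.mem_accepts]
    simpa [DFA.eval, DFA.evalFrom] using hacc
  · refine ⟨[a], hsing, by simp, Or.inr ⟨M.step M.start a, rfl, ?_⟩⟩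
    simp [DFA.eval, DFA.evalFrom]
  · -- middle transition
    intro x hx
    obtain ⟨u, rfl, hune, hcase⟩ := hx
    rcases hcase with ⟨h0, -⟩ | ⟨q₁, hq₁, heval⟩
    · exact absurd h0 (hpos q)
    · rw [(hinj hq₁).symm] at heval
      refine ⟨u ++ [a], by simp [← Multiset.coe_singleton, Multiset.coe_add], by simp,
        Or.inr ⟨M.step q a, rfl, ?_⟩⟩
      rw [DFA.eval_append_singleton, heval]
  · -- final transition
    intro x hx
    obtain ⟨u, rfl, hune, hcase⟩ := hx
    rcases hcase with ⟨h0, -⟩ | ⟨q₁, hq₁, heval⟩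
    · exact absurd h0 (hpos q)
    · rw [(hinj hq₁).symm] at heval
      refine ⟨u ++ [a], by simp [← Multiset.coe_singleton, Multiset.coe_add], by simp,
        Or.inl ⟨rfl, ?_⟩⟩
      rw [DFA.mem_accepts, DFA.eval_append_singleton, heval]
      exact hacc

def chain (M : DFA α σ) (enc : σ → ℕ) : σ → List α → List (Fm0 ℕ)
  | _, [] => []
  | q, [_] => [Fm0.ldiv (Fm0.prim (enc q)) S₀]
  | q, a :: b :: t =>
      Fm0.ldiv (Fm0.prim (enc q)) (Fm0.prim (enc (M.step q a)))
        :: chain M enc (M.step q a) (b :: t)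

lemma chain_forall2 (M : DFA α σ) (enc : σ → ℕ) :
    ∀ (t : List α) (q : σ), t ≠ [] → M.evalFrom q t ∈ M.accept →
      List.Forall₂ (fun a T => (a, T) ∈ dict M enc) t (chain M enc q t)
  | [], _, hne, _ => absurd rfl hne
  | [a], q, _, hacc => by
      refine List.Forall₂.cons ?_ List.Forall₂.nil
      refine mem_dict.mpr (Or.inr (Or.inr (Or.inr ⟨q, ?_, rfl⟩)))
      simpa [DFA.evalFrom] using hacc
  | a :: b :: t, q, _, hacc => by
      refine List.Forall₂.cons (mem_dict.mpr (Or.inr (Or.inr (Or.inl ⟨q, rfl⟩)))) ?_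
      refine chain_forall2 M enc (b :: t) (M.step q a) (by simp) ?_
      simpa [DFA.evalFrom] using hacc

omit [Fintype α] [Fintype σ] in
lemma chain_dcs (M : DFA α σ) (enc : σ → ℕ) :
    ∀ (t : List α) (q : σ), t ≠ [] →
      Dcs ℕ (Fm0.prim (enc q) :: chain M enc q t) S₀
  | [], _, hne => absurd rfl hne
  | [a], q, _ => by
      have := Dcs.ldivL [] [] [Fm0.prim (enc q)] (Fm0.prim (enc q)) S₀ S₀
        (Dcs.ax S₀) (Dcs.ax _) (by simp)
      simpa [chain] using this
  | a :: b :: t, q, _ => by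
      have ih := chain_dcs M enc (b :: t) (M.step q a) (by simp)
      have := Dcs.ldivL [] (chain M enc (M.step q a) (b :: t)) [Fm0.prim (enc q)]
        (Fm0.prim (enc q)) (Fm0.prim (enc (M.step q a))) S₀ ih (Dcs.ax _) (by simp)
      simpa [chain] using this

end Grammar

lemma forall2_perm {α β : Type} {r : α → β → Prop} {w u : List α} (h : w.Perm u) :
    ∀ {ts : List β}, List.Forall₂ r u ts →
      ∃ ts', List.Forall₂ r w ts' ∧ ts'.Perm ts := by
  induction h with
  | nil =>
      intro ts hts
      rw [List.forall₂_nil_left_iff] at hts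
      subst hts
      exact ⟨[], List.Forall₂.nil, List.Perm.nil⟩
  | cons x _ ih =>
      intro ts hts
      rcases List.forall₂_cons_left_iff.mp hts with ⟨b, ts₀, hb, hts₀, rfl⟩
      obtain ⟨ts₁, h₁, h₂⟩ := ih hts₀
      exact ⟨b :: ts₁, List.Forall₂.cons hb h₁, List.Perm.cons b h₂⟩
  | swap x y l =>
      intro ts hts
      rcases List.forall₂_cons_left_iff.mp hts with ⟨t₁, ts₀, h₁, hts₀, rfl⟩
      rcases List.forall₂_cons_left_iff.mp hts₀ with ⟨t₂, ts₁, h₂, hts₁, rfl⟩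
      exact ⟨t₂ :: t₁ :: ts₁, List.Forall₂.cons h₂ (List.Forall₂.cons h₁ hts₁),
        List.Perm.swap t₁ t₂ ts₁⟩
  | trans _ _ ih₁ ih₂ =>
      intro ts hts
      obtain ⟨tsm, hm₁, hm₂⟩ := ih₂ hts
      obtain ⟨ts', h₁, h₂⟩ := ih₁ hm₁
      exact ⟨ts', h₁, h₂.trans hm₂⟩

lemma sum_map_singleton {α : Type} (w : List α) :
    (w.map fun a => ({a} : Multiset α)).sum = (↑w : Multiset α) := by
  induction w with
  | nil => rfl
  | cons a t ih =>
      simp only [List.map_cons, List.sum_cons, ih]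
      rw [Multiset.singleton_add, Multiset.cons_coe]

end LCSaux

/-- `(L+(CS))`-grammars recognize all permutations of regular languages: for
every regular language `R` over a finite alphabet with `ε ∉ R`, some
`(L+(CS))`-grammar recognizes exactly `perm(R)`. -/
theorem LCS_grammars_recognize_perm_of_regular (α : Type) [Fintype α]
    (R : Language α) (hreg : R.IsRegular) (hε : [] ∉ R) :
    ∃ (S : Fm0 ℕ) (rel : List (α × Fm0 ℕ)),
      GLang (Dcs ℕ) S rel = permClosure R := by
  classical
  obtain ⟨σ, instσ, M, hM⟩ := hreg
  obtain ⟨f, hf⟩ := Countable.exists_injective_nat σ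
  set enc : σ → ℕ := fun q => f q + 1 with henc
  have hinj : Function.Injective enc := fun a b h => hf (by simpa [henc] using h)
  have hpos : ∀ q, enc q ≠ 0 := fun q => Nat.succ_ne_zero _
  refine ⟨LCSaux.S₀, LCSaux.dict M enc, ?_⟩
  ext w
  constructor
  · rintro ⟨hne, Ts, hTs, hD⟩
    have hTs2 : List.Forall₂
        (fun T a => ({a} : Multiset α) ∈ LCSaux.interp (LCSaux.v0 M enc) T) Ts w :=
      (List.Forall₂.flip hTs).imp (fun T a h => LCSaux.dict_sound hinj hpos h)
    have hTs3 : List.Forall₂ (fun T m => m ∈ LCSaux.interp (LCSaux.v0 M enc) T) Ts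
        (w.map fun a => ({a} : Multiset α)) :=
      List.forall₂_map_right_iff.mpr hTs2
    have hsum := LCSaux.sound (LCSaux.v0 M enc) hD _ hTs3
    rw [LCSaux.sum_map_singleton] at hsum
    have hsum' : (↑w : Multiset α) ∈ LCSaux.v0 M enc 0 := hsum
    obtain ⟨u, hwu, hune, hcase⟩ := hsum'
    rcases hcase with ⟨-, huacc⟩ | ⟨q, hq, -⟩
    · exact ⟨u, hM ▸ huacc, Multiset.coe_eq_coe.mp hwu⟩
    · exact absurd hq.symm (hpos q)
  · rintro ⟨u, huR, hperm⟩
    have huM : u ∈ M.accepts := by rw [hM]; exact huR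
    have hune : u ≠ [] := by rintro rfl; exact hε huR
    have hwne : w ≠ [] := by
      intro h
      apply hune
      have hl := hperm.length_eq
      rw [h] at hl
      exact List.length_eq_zero_iff.mp hl.symm
    obtain ⟨Tsu, hF, hDcs⟩ :
        ∃ Tsu, List.Forall₂ (fun a T => (a, T) ∈ LCSaux.dict M enc) u Tsu ∧
          Dcs ℕ Tsu LCSaux.S₀ := by
      cases u with
      | nil => exact absurd rfl hune
      | cons a t =>
        rcases eq_or_ne t [] with rfl | ht
        · refine ⟨[LCSaux.S₀], List.Forall₂.cons ?_ List.Forall₂.nil, Dcs.ax _⟩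
          refine LCSaux.mem_dict.mpr (Or.inl ⟨?_, rfl⟩)
          simpa [DFA.mem_accepts, DFA.eval, DFA.evalFrom] using huM
        · have hacc : M.evalFrom (M.step M.start a) t ∈ M.accept := by
            simpa [DFA.mem_accepts, DFA.eval, DFA.evalFrom] using huM
          refine ⟨Fm0.prim (enc (M.step M.start a))
              :: LCSaux.chain M enc (M.step M.start a) t,
            List.Forall₂.cons (LCSaux.mem_dict.mpr (Or.inr (Or.inl rfl)))
              (LCSaux.chain_forall2 M enc t (M.step M.start a) ht hacc),
            LCSaux.chain_dcs M enc t (M.step M.start a) ht⟩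
    obtain ⟨Ts', hF', hp⟩ := LCSaux.forall2_perm hperm hF
    exact ⟨hwne, Ts', hF', LCSaux.dcs_perm hp.symm hDcs⟩
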